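/- arXiv:1710.10712 — 2 statements merged into one kernel-verified Lean document; each statement's English description precedes it below -/
import Mathlib

section
/- Let G be a finite group in which |ab| = |a||b| whenever a and b are elements of coprime orders. Then G is nilpotent. -/
set_option linter.unusedSectionVars false

section BW

variable {G : Type*} [Group G] [Finite G]
  (h : ∀ a b : G, Nat.Coprime (orderOf a) (orderOf b) →
      orderOf (a * b) = orderOf a * orderOf b)

include h

/-- If `w` is a `p`-element, `x` and `w * x` both have order prime to `p`, then `w = 1`. -/
lemma bw_cancel {p : ℕ} [hp : Fact p.Prime] (P : Sylow p G) {n : ℕ} (hn : ¬ p ∣ n)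
    {w x : G} (hw : w ∈ (P : Subgroup G)) (hx : orderOf x ∣ n)
    (hwx : orderOf (w * x) ∣ n) : w = 1 := by
  obtain ⟨k, hk⟩ := IsPGroup.iff_orderOf.mp P.isPGroup' (⟨w, hw⟩ : (P : Subgroup G))
  rw [Subgroup.orderOf_mk] at hk
  have hpx : ¬ p ∣ orderOf x := fun hd => hn (hd.trans hx)
  have hco : Nat.Coprime (orderOf w) (orderOf x) := by
    rw [hk]
    exact Nat.Coprime.pow_left _ ((Nat.Prime.coprime_iff_not_dvd hp.out).mpr hpx)
  have ho := h w x hco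
  rw [ho] at hwx
  have h1 : orderOf w ∣ n := (dvd_mul_right _ _).trans hwx
  have hk0 : k = 0 := by
    by_contra hk0
    exact hn ((dvd_pow_self p hk0).trans (hk ▸ h1))
  exact orderOf_eq_one_iff.mp (by rw [hk, hk0, pow_zero])

/-- The multiplication map `P × {x : orderOf x ∣ n} → G` is injective when `p ∤ n`. -/
lemma bw_inj {p : ℕ} [hp : Fact p.Prime] (P : Sylow p G) {n : ℕ} (hn : ¬ p ∣ n) :
    Function.Injective
      (fun ux : ↥(P : Subgroup G) × {x : G // orderOf x ∣ n} => (ux.1 : G) * (ux.2 : G)) := by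
  rintro ⟨u, x, hx⟩ ⟨v, y, hy⟩ heq
  simp only at heq
  have hyx : ((v⁻¹ * u : (P : Subgroup G)) : G) * x = y := by
    push_cast
    rw [mul_assoc, heq, ← mul_assoc, inv_mul_cancel, one_mul]
  have hw1 : ((v⁻¹ * u : (P : Subgroup G)) : G) = 1 :=
    bw_cancel h P hn (v⁻¹ * u).2 hx (by rw [hyx]; exact hy)
  have huv : u = v := by
    have : (v⁻¹ * u : (P : Subgroup G)) = 1 := Subtype.ext hw1
    rwa [inv_mul_eq_one, eq_comm] at this
  have hxy : x = y := by rw [← hyx, hw1, one_mul]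
  subst huv; subst hxy; rfl

/-- The key counting lemma: if `n` is a Hall divisor of `|G|`, there are at least `n`
elements of order dividing `n`. -/
lemma bw_key : ∀ n : ℕ, n ∣ Nat.card G → Nat.Coprime n (Nat.card G / n) →
    n ≤ Nat.card {x : G // orderOf x ∣ n} := by
  intro n
  induction n using Nat.strong_induction_on with
  | _ n IH =>
    intro hnN hcop
    rcases eq_or_ne n 1 with rfl | hn1
    · haveI : Nonempty {x : G // orderOf x ∣ 1} := ⟨⟨1, by simp⟩⟩
      exact Nat.one_le_iff_ne_zero.mpr Nat.card_pos.ne'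
    have hN0 : Nat.card G ≠ 0 := Nat.card_pos.ne'
    have hn0 : n ≠ 0 := fun hn => hN0 (Nat.eq_zero_of_zero_dvd (hn ▸ hnN))
    set p := n.minFac with hpdef
    have hp : p.Prime := Nat.minFac_prime hn1
    haveI : Fact p.Prime := ⟨hp⟩
    set a := n.factorization p with hadef
    have hpa : p ^ a ∣ n := Nat.ordProj_dvd n p
    set n' := n / p ^ a with hn'def
    have hn'n : n' ∣ n := Nat.ordCompl_dvd n p
    have ha0 : a ≠ 0 := by
      have := Nat.Prime.factorization_pos_of_dvd hp hn0 (Nat.minFac_dvd n)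
      omega
    have hn'lt : n' < n :=
      Nat.div_lt_self (Nat.pos_of_ne_zero hn0) (Nat.one_lt_pow ha0 hp.one_lt)
    have hpn' : ¬ p ∣ n' := Nat.not_dvd_ordCompl hp hn0
    -- the p-part of n is the p-part of |G|
    set t := Nat.card G / n with htdef
    have hNt : Nat.card G = n * t := (Nat.mul_div_cancel' hnN).symm
    have ht0 : t ≠ 0 := by
      intro h0; rw [h0, mul_zero] at hNt; exact hN0 hNt
    have hpt : ¬ p ∣ t := by
      intro hd
      have : Nat.Coprime p t := Nat.Coprime.coprime_dvd_left (Nat.minFac_dvd n) hcop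
      exact (Nat.Prime.coprime_iff_not_dvd hp).mp this hd
    have hfa : (Nat.card G).factorization p = a := by
      rw [hNt, Nat.factorization_mul hn0 ht0]
      simp [Nat.factorization_eq_zero_of_not_dvd hpt, hadef]
    -- recursion
    have hn'N : n' ∣ Nat.card G := hn'n.trans hnN
    have hprod : p ^ a * n' = n := Nat.ordProj_mul_ordCompl_eq_self n p
    have hNdivn' : Nat.card G / n' = p ^ a * t := by
      have : Nat.card G = n' * (p ^ a * t) := by
        rw [hNt, ← hprod]; ring
      rw [this, Nat.mul_div_cancel_left _ (Nat.pos_of_ne_zero (by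
        intro h0; rw [h0, zero_mul] at this; exact hN0 this))]
    have hcop' : Nat.Coprime n' (Nat.card G / n') := by
      rw [hNdivn']
      exact Nat.Coprime.mul_right
        ((Nat.Coprime.pow_right a ((Nat.Prime.coprime_iff_not_dvd hp).mpr hpn').symm))
        (Nat.Coprime.coprime_dvd_left hn'n hcop)
    have hIH : n' ≤ Nat.card {x : G // orderOf x ∣ n'} := IH n' hn'lt hn'N hcop'
    -- Sylow subgroup
    obtain ⟨P⟩ : Nonempty (Sylow p G) := inferInstance
    have hPcard : Nat.card (P : Subgroup G) = p ^ a := by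
      rw [Sylow.card_eq_multiplicity, hfa]
    -- the multiplication map into {x // orderOf x ∣ n}
    have hmapdvd : ∀ (u : (P : Subgroup G)) (x : {x : G // orderOf x ∣ n'}),
        orderOf ((u : G) * (x : G)) ∣ n := by
      intro u x
      have hu : orderOf (u : G) ∣ p ^ a := by
        rw [← hPcard, Subgroup.orderOf_coe]; exact orderOf_dvd_natCard u
      have hcopan' : Nat.Coprime (p ^ a) n' :=
        Nat.Coprime.pow_left a ((Nat.Prime.coprime_iff_not_dvd hp).mpr hpn')
      have hco : Nat.Coprime (orderOf (u : G)) (orderOf (x : G)) :=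
        Nat.Coprime.coprime_dvd_right x.2 (Nat.Coprime.coprime_dvd_left hu hcopan')
      rw [h _ _ hco]
      exact hprod ▸ mul_dvd_mul hu x.2
    let f : ↥(P : Subgroup G) × {x : G // orderOf x ∣ n'} → {x : G // orderOf x ∣ n} :=
      fun ux => ⟨(ux.1 : G) * (ux.2 : G), hmapdvd ux.1 ux.2⟩
    have hfinj : Function.Injective f := by
      intro a b hab
      exact bw_inj h P hpn' (congrArg Subtype.val hab)
    calc n = p ^ a * n' := hprod.symm
      _ ≤ p ^ a * Nat.card {x : G // orderOf x ∣ n'} := Nat.mul_le_mul_left _ hIH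
      _ = Nat.card (↥(P : Subgroup G) × {x : G // orderOf x ∣ n'}) := by
          rw [Nat.card_prod, hPcard]
      _ ≤ Nat.card {x : G // orderOf x ∣ n} := Nat.card_le_card_of_injective f hfinj

end BW

theorem baumslag_wiegold (G : Type*) [Group G] [Finite G]
    (h : ∀ a b : G, Nat.Coprime (orderOf a) (orderOf b) →
      orderOf (a * b) = orderOf a * orderOf b) :
    Group.IsNilpotent G := by
  have hN0 : Nat.card G ≠ 0 := Nat.card_pos.ne'
  apply ((isNilpotent_of_finite_tfae (G := G)).out 3 0).mp
  intro p hp P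
  set a := (Nat.card G).factorization p with hadef
  set m := Nat.card G / p ^ a with hmdef
  have hpm : ¬ p ∣ m := Nat.not_dvd_ordCompl hp.out hN0
  have hmN : m ∣ Nat.card G := Nat.ordCompl_dvd _ p
  have hprod : p ^ a * m = Nat.card G := Nat.ordProj_mul_ordCompl_eq_self _ p
  have hm0 : m ≠ 0 := by
    intro h0; rw [h0, mul_zero] at hprod; exact hN0 hprod.symm
  have hNdivm : Nat.card G / m = p ^ a := by
    rw [← hprod, mul_comm, Nat.mul_div_cancel_left _ (Nat.pos_of_ne_zero hm0)]
  have hcop : Nat.Coprime m (Nat.card G / m) := by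
    rw [hNdivm]
    exact Nat.Coprime.pow_right a ((Nat.Prime.coprime_iff_not_dvd hp.out).mpr hpm).symm
  have hlow : m ≤ Nat.card {x : G // orderOf x ∣ m} := bw_key h m hmN hcop
  have hPcard : Nat.card (P : Subgroup G) = p ^ a := Sylow.card_eq_multiplicity P
  -- upper bound via the injection P × T(m) → G
  have hinj := bw_inj h P hpm (n := m)
  have hcardle : Nat.card (↥(P : Subgroup G) × {x : G // orderOf x ∣ m}) ≤ Nat.card G :=
    Nat.card_le_card_of_injective _ hinj
  rw [Nat.card_prod, hPcard] at hcardle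
  have hup : Nat.card {x : G // orderOf x ∣ m} ≤ m := by
    have := hcardle.trans_eq hprod.symm
    exact Nat.le_of_mul_le_mul_left this (Nat.pos_of_ne_zero
      (fun h0 => by rw [h0, zero_mul] at hprod; exact hN0 hprod.symm))
  have hTm : Nat.card {x : G // orderOf x ∣ m} = m := le_antisymm hup hlow
  -- the multiplication map is bijective
  have hbij : Function.Bijective
      (fun ux : ↥(P : Subgroup G) × {x : G // orderOf x ∣ m} => (ux.1 : G) * (ux.2 : G)) := by
    rw [Nat.bijective_iff_injective_and_card]
    exact ⟨hinj, by rw [Nat.card_prod, hPcard, hTm, hprod]⟩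
  -- every p-element lies in P
  have hmem : ∀ z : G, (∃ k : ℕ, orderOf z = p ^ k) → z ∈ (P : Subgroup G) := by
    rintro z ⟨k, hk⟩
    obtain ⟨⟨u, x⟩, hux⟩ := hbij.2 z
    simp only at hux
    have hu : orderOf (u : G) ∣ p ^ a := by
      rw [← hPcard, Subgroup.orderOf_coe]; exact orderOf_dvd_natCard u
    have hcopkm : Nat.Coprime (p ^ k) m :=
      Nat.Coprime.pow_left k ((Nat.Prime.coprime_iff_not_dvd hp.out).mpr hpm)
    have hco : Nat.Coprime (orderOf (u : G)) (orderOf (x : G)) :=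
      Nat.Coprime.coprime_dvd_right x.2
        (Nat.Coprime.coprime_dvd_left hu
          (Nat.Coprime.pow_left a ((Nat.Prime.coprime_iff_not_dvd hp.out).mpr hpm)))
    have ho : orderOf z = orderOf (u : G) * orderOf (x : G) := by
      rw [← hux]; exact h _ _ hco
    have hxdvd : orderOf (x : G) ∣ p ^ k := by
      rw [← hk, ho]; exact dvd_mul_left _ _
    have hx1 : orderOf (x : G) = 1 := Nat.eq_one_of_dvd_coprimes hcopkm hxdvd x.2
    have : (x : G) = 1 := orderOf_eq_one_iff.mp hx1
    rw [← hux, this, mul_one]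
    exact u.2
  constructor
  intro w hw g
  have hworder : ∃ k : ℕ, orderOf w = p ^ k := by
    obtain ⟨k, hk⟩ := IsPGroup.iff_orderOf.mp P.isPGroup' (⟨w, hw⟩ : (P : Subgroup G))
    rw [Subgroup.orderOf_mk] at hk
    exact ⟨k, hk⟩
  apply hmem
  obtain ⟨k, hk⟩ := hworder
  refine ⟨k, ?_⟩
  have : orderOf (g * w * g⁻¹) = orderOf w := by
    have := orderOf_injective (MulAut.conj g).toMonoidHom (MulAut.conj g).injective w
    simpa [MulAut.conj] using this
  rw [this, hk]
end

section
/- Let G be a finite group and X the set of all powers of commutators [a,b] with gcd(|a|,|b|) = 1. Assume |xy| = |x||y| for all x, y ∈ X of coprime orders. If x ∈ X and N is a subgroup of G normalized by x with gcd(|x|,|N|) = 1, then [x,N] = 1, i.e., x centralizes N. -/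
open scoped commutatorElement

theorem coprime_centralizes (G : Type*) [Group G] [Finite G]
    (X : Set G)
    (hXdef : X = {x : G | ∃ (a b : G) (k : ℤ),
      Nat.Coprime (orderOf a) (orderOf b) ∧ x = ⁅a, b⁆ ^ k})
    (hX : ∀ x ∈ X, ∀ y ∈ X, Nat.Coprime (orderOf x) (orderOf y) →
      orderOf (x * y) = orderOf x * orderOf y)
    (x : G) (hx : x ∈ X) (N : Subgroup G)
    (hnorm : ∀ n ∈ N, x⁻¹ * n * x ∈ N)
    (hco : Nat.Coprime (orderOf x) (Nat.card N)) :
    ∀ n ∈ N, ⁅x, n⁆ = 1 := by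
  intro n hn
  set t : G := x⁻¹ * n⁻¹ * x * n with ht_def
  have htN : t ∈ N := by
    have := hnorm n⁻¹ (inv_mem hn)
    exact mul_mem this hn
  have hon : orderOf n ∣ Nat.card N := N.orderOf_dvd_natCard hn
  have hcot : Nat.Coprime (orderOf x) (orderOf t) :=
    Nat.Coprime.coprime_dvd_right (N.orderOf_dvd_natCard htN) hco
  have htX : t ∈ X := by
    rw [hXdef]
    refine ⟨x⁻¹, n⁻¹, 1, ?_, ?_⟩
    · rw [orderOf_inv, orderOf_inv]
      exact Nat.Coprime.coprime_dvd_right hon hco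
    · simp [commutatorElement_def, ht_def, mul_assoc]
  have hkey := hX x hx t htX hcot
  have hconj : x * t = n⁻¹ * x * n := by
    rw [ht_def]; group
  have hoconj : orderOf (x * t) = orderOf x := by
    rw [hconj]
    have hsc : SemiconjBy n⁻¹ x (n⁻¹ * x * n) := by
      unfold SemiconjBy; group
    exact (hsc.orderOf_eq).symm
  rw [hoconj] at hkey
  have hxpos : 0 < orderOf x := orderOf_pos x
  have hot : orderOf t = 1 := by
    nlinarith [hkey, hxpos]
  have ht1 : t = 1 := orderOf_eq_one_iff.mp hot
  have hcomm : x * n = n * x := by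
    have : x⁻¹ * n⁻¹ * x * n = 1 := ht1
    have h2 : x * (x⁻¹ * n⁻¹ * x * n) * n⁻¹ = x * 1 * n⁻¹ := by rw [this]
    group at h2
    have h3 : Commute n⁻¹ x := by
      have : n⁻¹ * x = x * n⁻¹ := by simpa [zpow_neg, zpow_one] using h2
      exact this
    exact ((Commute.inv_left_iff.mp h3).eq).symm
  exact commutatorElement_eq_one_iff_mul_comm.mpr hcomm
end
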